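/- For every integer n ≥ 2 and every i ∈ {0,1,...,n−1}, the function E_{i,1} Poisson-commutes with the momentum p_{n−i}: {E_{i,1}, p_{n−i}} = 0 identically on ℝ^{2n} (equivalently, q^{n−i} is a cyclic coordinate for E_{i,1}). -/

import Mathlib

open Matrix

noncomputable section

/-- Phase space ℝ^{2n}: pairs (q, p). -/
abbrev Phase (n : ℕ) := (Fin n → ℝ) × (Fin n → ℝ)

/-- Extended coordinates: `qext n q m` is `q^m` (1-based), with `q^0 := 1`
and `q^m := 0` for `m < 0` or `m > n`. -/
def qext (n : ℕ) (q : Fin n → ℝ) (m : ℤ) : ℝ :=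
  if h : 1 ≤ m ∧ m ≤ (n : ℤ) then q ⟨m.toNat - 1, by omega⟩
  else if m = 0 then 1 else 0

/-- The matrix `L(q)`: first column `-q^j`, superdiagonal `1`, all other entries `0`. -/
def Lmat (n : ℕ) (q : Fin n → ℝ) : Matrix (Fin n) (Fin n) ℝ :=
  Matrix.of fun j k => if (k : ℕ) = 0 then -q j else if (k : ℕ) = (j : ℕ) + 1 then 1 else 0

/-- The contravariant metric `G(q)` with entries `G^{jk} = q^{j+k-n-1}` (1-based indices). -/
def Gmat (n : ℕ) (q : Fin n → ℝ) : Matrix (Fin n) (Fin n) ℝ :=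
  Matrix.of fun j k => qext n q ((j : ℤ) + (k : ℤ) + 1 - (n : ℤ))

/-- The Killing tensors: `K_r = Σ_{k=0}^{r-1} q^k L^{r-1-k}` (so `K_1 = I`). -/
def Kmat (n : ℕ) (q : Fin n → ℝ) (r : ℕ) : Matrix (Fin n) (Fin n) ℝ :=
  ∑ k ∈ Finset.range r, qext n q (k : ℤ) • (Lmat n q) ^ (r - 1 - k)

/-- `E_{i,r}(q,p) = (1/2) Σ_{l,m} (K_r L^i G)^{lm} p_l p_m`. -/
def Efun (n i r : ℕ) : Phase n → ℝ := fun x =>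
  (1 / 2) * ∑ l : Fin n, ∑ m : Fin n,
    (Kmat n x.1 r * (Lmat n x.1) ^ i * Gmat n x.1) l m * x.2 l * x.2 m

/-- Canonical Poisson bracket on `ℝ^{2n}`. -/
def pb (n : ℕ) (f g : Phase n → ℝ) : Phase n → ℝ := fun x =>
  ∑ i : Fin n,
    (fderiv ℝ f x (Pi.single i 1, 0) * fderiv ℝ g x (0, Pi.single i 1)
      - fderiv ℝ f x (0, Pi.single i 1) * fderiv ℝ g x (Pi.single i 1, 0))

-- Auxiliary lemmas

lemma qext_zero (n : ℕ) (q : Fin n → ℝ) : qext n q 0 = 1 := by simp [qext]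

lemma qext_eq_zero (n : ℕ) (q : Fin n → ℝ) {a : ℤ} (h : a < 0 ∨ (n:ℤ) < a) :
    qext n q a = 0 := by
  unfold qext
  rw [dif_neg (by omega), if_neg (by omega)]

lemma qext_coe_succ (n : ℕ) (q : Fin n → ℝ) (l : Fin n) : qext n q ((l:ℤ)+1) = q l := by
  unfold qext
  rw [dif_pos (by constructor <;> omega)]
  apply congrArg
  apply Fin.ext
  simp

lemma qext_update (n : ℕ) (q : Fin n → ℝ) (j : Fin n) (c : ℝ) {a : ℤ}
    (h : a ≠ (j:ℤ)+1) : qext n (Function.update q j c) a = qext n q a := by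
  unfold qext
  split_ifs with h1
  · refine Function.update_of_ne (fun he => h ?_) _ _
    have hv : a.toNat - 1 = (j:ℕ) := congrArg Fin.val he
    omega
  all_goals rfl

lemma Kmat_one (n : ℕ) (q : Fin n → ℝ) : Kmat n q 1 = 1 := by
  simp [Kmat, qext_zero]

def Mform (n i : ℕ) (q : Fin n → ℝ) : Matrix (Fin n) (Fin n) ℝ :=
  Matrix.of fun l m =>
    if (l:ℕ) + i < n ∧ (m:ℕ) + i < n then qext n q ((l:ℤ)+(m:ℤ)+1+(i:ℤ)-(n:ℤ))
    else if n ≤ (l:ℕ) + i ∧ n ≤ (m:ℕ) + i then -qext n q ((l:ℤ)+(m:ℤ)+1+(i:ℤ)-(n:ℤ))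
    else 0

lemma mul_L_apply (n : ℕ) (q : Fin n → ℝ) (M : Matrix (Fin n) (Fin n) ℝ) (l m : Fin n) :
    (Lmat n q * M) l m =
      -q l * M ⟨0, l.pos⟩ m + (if h : (l:ℕ)+1 < n then M ⟨(l:ℕ)+1, h⟩ m else 0) := by
  rw [Matrix.mul_apply]
  have key : ∀ t : Fin n, Lmat n q l t * M t m =
      (if t = ⟨0, l.pos⟩ then -q l * M t m else 0) +
      (if h : (l:ℕ)+1 < n then (if t = ⟨(l:ℕ)+1, h⟩ then M t m else 0) else 0) := by
    intro t
    simp only [Lmat, Matrix.of_apply]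
    by_cases h3 : (l:ℕ)+1 < n
    · simp only [dif_pos h3]
      split_ifs <;> simp_all [Fin.ext_iff] <;> omega
    · simp only [dif_neg h3]
      split_ifs <;> simp_all [Fin.ext_iff] <;> omega
  rw [Finset.sum_congr rfl (fun t _ => key t), Finset.sum_add_distrib]
  congr 1
  · rw [Finset.sum_ite_eq' Finset.univ]
    simp
  · by_cases h : (l:ℕ)+1 < n
    · simp only [dif_pos h]
      rw [Finset.sum_ite_eq' Finset.univ]
      simp
    · simp [h]

lemma Mform_zero_row (n i : ℕ) (hi : i < n) (q : Fin n → ℝ) (h0 : 0 < n) (m : Fin n) :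
    Mform n i q ⟨0, h0⟩ m = if (m:ℕ) + i + 1 = n then 1 else 0 := by
  have hval : ((⟨0, h0⟩ : Fin n) : ℕ) = 0 := rfl
  simp only [Mform, Matrix.of_apply, hval]
  by_cases hm : (m:ℕ) + i + 1 = n
  · rw [if_pos hm, if_pos ⟨by omega, by omega⟩,
      show ((0:ℕ):ℤ) + (m:ℤ) + 1 + (i:ℤ) - (n:ℤ) = 0 by push_cast; omega, qext_zero]
  · rw [if_neg hm]
    split_ifs with h1 h2
    · exact qext_eq_zero n q (by push_cast; omega)
    · exfalso; omega
    · rfl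

lemma LG_eq_Mform (n : ℕ) (q : Fin n → ℝ) : ∀ i, i < n →
    Lmat n q ^ i * Gmat n q = Mform n i q := by
  intro i
  induction i with
  | zero =>
    intro _
    ext l m
    simp only [pow_zero, one_mul, Mform, Gmat, Matrix.of_apply]
    rw [if_pos ⟨by omega, by omega⟩]
    congr 1
    all_goals (push_cast; ring)
  | succ i ih =>
    intro h
    have hi : i < n := by omega
    rw [pow_succ', mul_assoc, ih hi]
    ext l m
    rw [mul_L_apply, Mform_zero_row n i hi q l.pos m,
        show (-q l : ℝ) = -qext n q ((l:ℤ)+1) by rw [qext_coe_succ]]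
    by_cases hl : (l:ℕ)+1 < n
    · rw [dif_pos hl]
      have hval : ((⟨(l:ℕ)+1, hl⟩ : Fin n) : ℕ) = (l:ℕ)+1 := rfl
      simp only [Mform, Matrix.of_apply, hval]
      split_ifs <;>
        simp only [neg_mul, mul_one, mul_zero, add_zero, zero_add, neg_zero, sub_zero] <;>
        first
          | ring1
          | omega
          | (exfalso; omega)
          | (rw [neg_add_eq_zero]; congr 1 <;> push_cast <;> omega)
          | (simp only [neg_inj]; congr 1 <;> push_cast <;> omega)
          | (congr 1 <;> push_cast <;> omega)
          | ((try simp only [neg_eq_zero]); exact qext_eq_zero n q (by push_cast; omega))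
          | (symm; (try simp only [neg_eq_zero]);
             exact qext_eq_zero n q (by push_cast; omega))
    · rw [dif_neg hl]
      simp only [Mform, Matrix.of_apply]
      split_ifs <;>
        simp only [neg_mul, mul_one, mul_zero, add_zero, zero_add, neg_zero, sub_zero] <;>
        first
          | ring1
          | omega
          | (exfalso; omega)
          | (rw [neg_add_eq_zero]; congr 1 <;> push_cast <;> omega)
          | (simp only [neg_inj]; congr 1 <;> push_cast <;> omega)
          | (congr 1 <;> push_cast <;> omega)
          | ((try simp only [neg_eq_zero]); exact qext_eq_zero n q (by push_cast; omega))
          | (symm; (try simp only [neg_eq_zero]);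
             exact qext_eq_zero n q (by push_cast; omega))

lemma Mform_update (n i : ℕ) (q : Fin n → ℝ) (c : ℝ) (hj : n - i - 1 < n) (hi : i < n) :
    Mform n i (Function.update q ⟨n - i - 1, hj⟩ c) = Mform n i q := by
  ext l m
  have hval : ((⟨n - i - 1, hj⟩ : Fin n) : ℕ) = n - i - 1 := rfl
  simp only [Mform, Matrix.of_apply]
  split_ifs with h1 h2
  · rw [qext_update n q _ c (by rw [hval]; push_cast; omega)]
  · rw [qext_update n q _ c (by rw [hval]; push_cast; omega)]
  · rfl

-- differentiability
lemma diff_proj (n : ℕ) (j : Fin n) : Differentiable ℝ fun q : Fin n → ℝ => q j :=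
  (ContinuousLinearMap.proj j : (Fin n → ℝ) →L[ℝ] ℝ).differentiable

lemma diff_qext (n : ℕ) (a : ℤ) : Differentiable ℝ fun q : Fin n → ℝ => qext n q a := by
  unfold qext
  by_cases h : 1 ≤ a ∧ a ≤ (n:ℤ)
  · simp only [dif_pos h]
    exact diff_proj n _
  · simp only [dif_neg h]
    exact differentiable_const _

lemma diff_L (n : ℕ) (l m : Fin n) : Differentiable ℝ fun q : Fin n → ℝ => Lmat n q l m := by
  simp only [Lmat, Matrix.of_apply]
  by_cases h1 : (m:ℕ) = 0
  · simp only [if_pos h1]; exact (diff_proj n l).neg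
  · simp only [if_neg h1]
    by_cases h2 : (m:ℕ) = (l:ℕ) + 1 <;> simp [h2] <;> exact differentiable_const _

lemma diff_mul_entries (n : ℕ) {A B : (Fin n → ℝ) → Matrix (Fin n) (Fin n) ℝ}
    (hA : ∀ l m, Differentiable ℝ fun q => A q l m)
    (hB : ∀ l m, Differentiable ℝ fun q => B q l m) (l m : Fin n) :
    Differentiable ℝ fun q => (A q * B q) l m := by
  simp only [Matrix.mul_apply]
  exact Differentiable.fun_sum fun t _ => (hA l t).mul (hB t m)

lemma diff_Lpow (n i : ℕ) (l m : Fin n) :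
    Differentiable ℝ fun q : Fin n → ℝ => (Lmat n q ^ i) l m := by
  induction i generalizing l m with
  | zero =>
    simp only [pow_zero, Matrix.one_apply]
    exact differentiable_const _
  | succ i ih =>
    have : ∀ q : Fin n → ℝ, Lmat n q ^ (i+1) = Lmat n q ^ i * Lmat n q := fun q => pow_succ _ _
    simp only [this]
    exact diff_mul_entries n (fun l m => ih l m) (diff_L n) l m

lemma diff_G (n : ℕ) (l m : Fin n) :
    Differentiable ℝ fun q : Fin n → ℝ => Gmat n q l m := diff_qext n _

lemma diff_K (n r : ℕ) (l m : Fin n) :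
    Differentiable ℝ fun q : Fin n → ℝ => Kmat n q r l m := by
  unfold Kmat
  simp only [Matrix.sum_apply, Matrix.smul_apply, smul_eq_mul]
  exact Differentiable.fun_sum fun k _ => (diff_qext n _).mul (diff_Lpow n _ l m)

lemma diff_entry (n i r : ℕ) (l m : Fin n) :
    Differentiable ℝ fun q : Fin n → ℝ =>
      (Kmat n q r * Lmat n q ^ i * Gmat n q) l m :=
  diff_mul_entries n
    (diff_mul_entries n (fun l m => diff_K n r l m) (fun l m => diff_Lpow n i l m))
    (fun l m => diff_G n l m) l m

lemma diff_p (n : ℕ) (l : Fin n) : Differentiable ℝ fun x : Phase n => x.2 l :=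
  ((ContinuousLinearMap.proj l).comp
    (ContinuousLinearMap.snd ℝ (Fin n → ℝ) (Fin n → ℝ))).differentiable

lemma diff_Efun (n i r : ℕ) : Differentiable ℝ (Efun n i r) := by
  unfold Efun
  apply Differentiable.const_mul
  apply Differentiable.fun_sum; intro l _
  apply Differentiable.fun_sum; intro m _
  exact (((diff_entry n i r l m).comp differentiable_fst).mul (diff_p n l)).mul (diff_p n m)

lemma add_single_eq_update (n : ℕ) (q : Fin n → ℝ) (j : Fin n) (t : ℝ) :
    q + t • (Pi.single j 1 : Fin n → ℝ) = Function.update q j (q j + t) := by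
  funext k
  by_cases hk : k = j
  · subst hk; simp [Function.update_self]
  · simp [Function.update_of_ne hk, Pi.single_eq_of_ne hk]

lemma Efun_const_dir (n i : ℕ) (hi : i < n) (hj : n - i - 1 < n) (x : Phase n) (t : ℝ) :
    Efun n i 1 (x.1 + t • (Pi.single ⟨n - i - 1, hj⟩ 1 : Fin n → ℝ), x.2) = Efun n i 1 x := by
  have key : ∀ q : Fin n → ℝ,
      Kmat n q 1 * Lmat n q ^ i * Gmat n q = Mform n i q := by
    intro q
    rw [Kmat_one, one_mul, LG_eq_Mform n q i hi]
  unfold Efun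
  simp only [key, add_single_eq_update]
  rw [Mform_update n i x.1 _ hj hi]

lemma fderiv_Efun_dir (n i : ℕ) (hi : i < n) (hj : n - i - 1 < n) (x : Phase n) :
    fderiv ℝ (Efun n i 1) x ((Pi.single ⟨n - i - 1, hj⟩ 1 : Fin n → ℝ), (0 : Fin n → ℝ)) = 0 := by
  set v : Phase n := ((Pi.single ⟨n - i - 1, hj⟩ 1 : Fin n → ℝ), (0 : Fin n → ℝ)) with hv
  have hc : HasDerivAt (fun t : ℝ => x + t • v) v 0 := by
    simpa using ((hasDerivAt_id (0:ℝ)).smul_const v).const_add x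
  have hE : HasFDerivAt (Efun n i 1) (fderiv ℝ (Efun n i 1) x) (x + (0:ℝ) • v) := by
    simpa using ((diff_Efun n i 1) (x + (0:ℝ) • v)).hasFDerivAt
  have hcomp : HasDerivAt (fun t : ℝ => Efun n i 1 (x + t • v))
      (fderiv ℝ (Efun n i 1) x v) 0 := by
    exact hE.comp_hasDerivAt 0 hc
  have hconst : (fun t : ℝ => Efun n i 1 (x + t • v)) = fun _ => Efun n i 1 x := by
    funext t
    have hx : x + t • v = (x.1 + t • (Pi.single ⟨n - i - 1, hj⟩ 1 : Fin n → ℝ), x.2) := by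
      rw [hv]; ext <;> simp [Prod.add_def]
    rw [hx, Efun_const_dir n i hi hj x t]
  rw [hconst] at hcomp
  exact hcomp.unique (hasDerivAt_const 0 _)

lemma fderiv_p_coord (n : ℕ) (j : Fin n) (x : Phase n) (v : Phase n) :
    fderiv ℝ (fun y : Phase n => y.2 j) x v = v.2 j := by
  have : (fun y : Phase n => y.2 j) =
      ⇑((ContinuousLinearMap.proj j).comp
        (ContinuousLinearMap.snd ℝ (Fin n → ℝ) (Fin n → ℝ))) := rfl
  rw [this, ContinuousLinearMap.fderiv]
  rfl


/-- for `i ∈ {0,…,n−1}`, `{E_{i,1}, p_{n−i}} = 0` identically on `ℝ^{2n}`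
(`p_{n−i}` is 1-based, i.e. the coordinate with 0-based index `n−i−1`). -/
theorem Efun_pb_momentum (n : ℕ) (hn : 2 ≤ n) (i : ℕ) (hi : i < n) (x : Phase n) :
    pb n (Efun n i 1) (fun y => y.2 ⟨n - i - 1, by omega⟩) x = 0 := by
  have hj : n - i - 1 < n := by omega
  unfold pb
  simp only [fderiv_p_coord, Pi.zero_apply, mul_zero, sub_zero, Pi.single_apply,
    mul_ite, mul_one]
  rw [Finset.sum_ite_eq Finset.univ]
  simp only [Finset.mem_univ, if_true]
  exact fderiv_Efun_dir n i hi hj x
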